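/- Let n ≥ 1, N = 2^n, and let I_x^{top} be the N×N complex matrix with (I_x^{top})_{lm} = 1/2 if l and m differ exactly at the most significant bit (i.e., |l - m| = N/2 with l mod (N/2) = m mod (N/2)) and 0 otherwise. Given f : Fin (N/2) → Bool, define its extension f' : Fin N → Bool by f'(j) = f(j) for 0 ≤ j ≤ N/2 - 1 and f'(j) = false for N/2 ≤ j ≤ N - 1. Then S_{I_x^{top}}(f') = ∑_{j=0}^{N/2-1} (-1)^{f(j)}. In particular, if f is balanced (takes the value true on exactly N/4 arguments... i.e., ∑_{j<N/2} (-1)^{f(j)} = 0) then S_{I_x^{top}}(f') = 0, while if f is constant then S_{I_x^{top}}(f') = ±N/2. -/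

import Mathlib

open Matrix BigOperators

/-- The sign `(-1)^{f j}` as a complex number. -/
noncomputable def signC (b : Bool) : ℂ := if b then -1 else 1

/-- `S_B(f) = ∑_{j,k} (-1)^{f j} (-1)^{f k} B_{jk}`. -/
noncomputable def Sval {N : ℕ} (B : Matrix (Fin N) (Fin N) ℂ) (f : Fin N → Bool) : ℂ :=
  ∑ j, ∑ k, signC (f j) * signC (f k) * B j k

/-- The spin operator `I_x` for the most significant bit: entry `(l,m)` is `1/2` if `l`
and `m` differ exactly at bit `n-1` (equivalently `l XOR m = 2^{n-1}`, i.e. `|l - m| = N/2`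
with `l` and `m` congruent mod `N/2`), and `0` otherwise. -/
noncomputable def IxTop (n : ℕ) : Matrix (Fin (2 ^ n)) (Fin (2 ^ n)) ℂ :=
  Matrix.of fun l m => if l.val ^^^ m.val = 2 ^ (n - 1) then (1 / 2 : ℂ) else 0

/-- The extension `f'` of `f : Fin (N/2) → Bool` to `Fin N`, with `f' j = f j` for
`j < N/2` and `f' j = false` for `N/2 ≤ j`. -/
def extFun (n : ℕ) (f : Fin (2 ^ (n - 1)) → Bool) : Fin (2 ^ n) → Bool :=
  fun j => if h : j.val < 2 ^ (n - 1) then f ⟨j.val, h⟩ else false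

lemma xor_two_pow' {k i : ℕ} (h : i < 2 ^ k) : i ^^^ 2 ^ k = i + 2 ^ k := by
  apply Nat.eq_of_testBit_eq
  intro j
  rw [add_comm, show (2:ℕ)^k + i = 2^k * 1 + i by ring,
    Nat.testBit_two_pow_mul_add 1 h j, Nat.testBit_xor]
  rcases lt_trichotomy j k with hj | rfl | hj
  · simp [Nat.testBit_two_pow_of_ne (Nat.ne_of_gt hj), hj]
  · simp [Nat.testBit_two_pow_self, Nat.testBit_lt_two_pow h, Nat.testBit_one_zero]
  · have : i < 2 ^ j := lt_of_lt_of_le h (Nat.pow_le_pow_right (by norm_num) hj.le)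
    simp [Nat.testBit_lt_two_pow this, Nat.testBit_two_pow_of_ne (Nat.ne_of_lt hj),
      not_lt.mpr hj.le, Nat.testBit_eq_false_of_lt (show 1 < 2 ^ (j - k) from
        Nat.one_lt_two_pow (by omega))]

lemma xor_lt' {n a b : ℕ} (ha : a < 2 ^ n) (hb : b < 2 ^ n) : a ^^^ b < 2 ^ n := by
  apply Nat.lt_pow_two_of_testBit
  intro i hi
  have h2 : (2:ℕ)^n ≤ 2^i := Nat.pow_le_pow_right (by norm_num) hi
  rw [Nat.testBit_xor, Nat.testBit_lt_two_pow (lt_of_lt_of_le ha h2),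
    Nat.testBit_lt_two_pow (lt_of_lt_of_le hb h2)]
  rfl

lemma Sval_IxTop_eq (n : ℕ) (hn : 1 ≤ n) (f : Fin (2 ^ (n - 1)) → Bool) :
    Sval (IxTop n) (extFun n f) = (∑ j : Fin (2 ^ (n - 1)), signC (f j)) := by
  have hpos : 0 < 2 ^ (n - 1) := Nat.pow_pos (by norm_num)
  have hNN : 2 ^ n = 2 ^ (n - 1) + 2 ^ (n - 1) := by
    have h1 : n - 1 + 1 = n := by omega
    have h2 : 2 ^ n = 2 ^ (n - 1) * 2 := by rw [← pow_succ, h1]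
    omega
  have hlt : 2 ^ (n - 1) < 2 ^ n := by omega
  set σ : Fin (2 ^ n) → Fin (2 ^ n) :=
    fun j => ⟨j.val ^^^ 2 ^ (n - 1), xor_lt' j.isLt hlt⟩ with hσ
  have key : ∀ j : Fin (2 ^ n),
      (∑ k, signC (extFun n f j) * signC (extFun n f k) * IxTop n j k)
        = signC (extFun n f j) * signC (extFun n f (σ j)) * (1/2) := by
    intro j
    rw [Finset.sum_eq_single (σ j)]
    · simp only [IxTop, Matrix.of_apply, hσ]
      rw [if_pos (xor_cancel_left _ _)]
    · intro k _ hk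
      simp only [IxTop, Matrix.of_apply]
      rw [if_neg, mul_zero]
      intro hx
      apply hk
      have : k.val = j.val ^^^ 2 ^ (n - 1) := by
        rw [← hx, xor_cancel_left]
      exact Fin.ext this
    · intro hm; exact absurd (Finset.mem_univ _) hm
  set g : Fin (2 ^ n) → ℂ :=
    fun j => signC (extFun n f j) * signC (extFun n f (σ j)) * (1/2) with hg
  have hS : Sval (IxTop n) (extFun n f) = ∑ j, g j :=
    Finset.sum_congr rfl (fun j _ => key j)
  rw [hS]
  set e : Fin (2 ^ (n - 1)) ⊕ Fin (2 ^ (n - 1)) ≃ Fin (2 ^ n) :=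
    finSumFinEquiv.trans (finCongr hNN.symm) with he
  rw [← Equiv.sum_comp e g, Fintype.sum_sum_type]
  have hinl : ∀ a : Fin (2 ^ (n - 1)), g (e (Sum.inl a)) = signC (f a) * (1/2) := by
    intro a
    have hval : (e (Sum.inl a)).val = a.val := rfl
    have hxor : a.val ^^^ 2 ^ (n - 1) = a.val + 2 ^ (n - 1) := xor_two_pow' a.isLt
    simp only [hg, extFun, hσ, hval, hxor]
    rw [dif_pos a.isLt, dif_neg (by omega), Fin.eta]
    simp [signC]
  have hinr : ∀ b : Fin (2 ^ (n - 1)), g (e (Sum.inr b)) = signC (f b) * (1/2) := by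
    intro b
    have hval : (e (Sum.inr b)).val = 2 ^ (n - 1) + b.val := rfl
    have hxor : (2 ^ (n - 1) + b.val) ^^^ 2 ^ (n - 1) = b.val := by
      rw [add_comm, ← xor_two_pow' b.isLt, xor_cancel_right]
    simp only [hg, extFun, hσ, hval, hxor]
    rw [dif_neg (by omega), dif_pos b.isLt, Fin.eta]
    simp [signC]
  simp only [hinl, hinr]
  rw [← Finset.sum_add_distrib]
  congr 1
  ext a
  ring

/-- `S_{I_x^{top}}(f') = ∑_{j < N/2} (-1)^{f j}`; in particular it vanishes when `f` is
balanced and equals `± N/2` when `f` is constant. -/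
theorem S_IxTop_extension (n : ℕ) (hn : 1 ≤ n) (f : Fin (2 ^ (n - 1)) → Bool) :
    Sval (IxTop n) (extFun n f) = (∑ j : Fin (2 ^ (n - 1)), signC (f j)) ∧
      ((∑ j : Fin (2 ^ (n - 1)), signC (f j)) = 0 → Sval (IxTop n) (extFun n f) = 0) ∧
      (((∀ j, f j = true) ∨ (∀ j, f j = false)) →
        Sval (IxTop n) (extFun n f) = (2 ^ (n - 1) : ℂ)
          ∨ Sval (IxTop n) (extFun n f) = -(2 ^ (n - 1) : ℂ)) := by
  have key := Sval_IxTop_eq n hn f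
  refine ⟨key, fun h0 => by rw [key, h0], ?_⟩
  rintro (hc | hc)
  · right
    rw [key]
    simp [hc, signC, Finset.sum_const, Finset.card_univ]
  · left
    rw [key]
    simp [hc, signC, Finset.sum_const, Finset.card_univ]
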